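/- Let ν be a Borel probability measure on ℝ with ν([0, B]) = 1, let F(t) = ν((−∞, t]) be its CDF, and let V₁, V₂ be independent random variables each with law ν. Then for every r ∈ [0, B]: E[r·1{min(V₁,V₂) ≤ r < max(V₁,V₂)}] + E[min(V₁,V₂)·1{min(V₁,V₂) > r}] = r·(1 − F(r)²) + ∫_r^B (1 − F(t))² dt. -/

import Mathlib

open MeasureTheory ProbabilityTheory

/-- Expected revenue of a two-bidder second-price auction with reserve `r`:
if `V₁, V₂` are i.i.d. with law `ν` supported in `[0, B]` and CDF `F`, then
`E[r·1{min ≤ r < max}] + E[min·1{min > r}] = r(1 - F(r)²) + ∫_r^B (1 - F(t))² dt`. -/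
theorem two_bidder_revenue_formula (B : ℝ) (hB : 0 < B)
    (ν : Measure ℝ) [IsProbabilityMeasure ν] (hν : ν (Set.Icc 0 B) = 1)
    (F : ℝ → ℝ) (hF : ∀ t, F t = (ν (Set.Iic t)).toReal)
    (Ω : Type) [MeasureSpace Ω] [IsProbabilityMeasure (volume : Measure Ω)]
    (V₁ V₂ : Ω → ℝ) (hm₁ : Measurable V₁) (hm₂ : Measurable V₂)
    (hl₁ : Measure.map V₁ volume = ν) (hl₂ : Measure.map V₂ volume = ν)
    (hind : IndepFun V₁ V₂ volume)
    (r : ℝ) (hr : r ∈ Set.Icc (0 : ℝ) B) :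
    (∫ ω, ({ω : Ω | min (V₁ ω) (V₂ ω) ≤ r ∧ r < max (V₁ ω) (V₂ ω)}.indicator
        (fun _ => r) ω))
      + (∫ ω, ({ω : Ω | r < min (V₁ ω) (V₂ ω)}.indicator
        (fun ω => min (V₁ ω) (V₂ ω)) ω))
      = r * (1 - (F r) ^ 2) + ∫ t in r..B, (1 - F t) ^ 2 := by
  obtain ⟨hr0, hrB⟩ := hr
  set M : Ω → ℝ := fun ω => min (V₁ ω) (V₂ ω) with hMdef
  have hmM : Measurable M := hm₁.min hm₂
  -- basic CDF facts
  have hF0 : ∀ t, 0 ≤ F t := fun t => (hF t) ▸ ENNReal.toReal_nonneg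
  have hF1 : ∀ t, F t ≤ 1 := by
    intro t
    rw [hF t]
    have h := prob_le_one (μ := ν) (s := Set.Iic t)
    simpa using ENNReal.toReal_mono (by simp) h
  have hFmono : Monotone F := by
    intro a b hab
    rw [hF a, hF b]
    exact ENNReal.toReal_mono (measure_ne_top _ _)
      (measure_mono (Set.Iic_subset_Iic.mpr hab))
  have hFmeas : Measurable F := hFmono.measurable
  have hIoi : ∀ s, (ν (Set.Ioi s)).toReal = 1 - F s := by
    intro s
    have h1 : ν (Set.Iic s) + ν (Set.Ioi s) = 1 := by
      rw [← measure_union (Set.Iic_disjoint_Ioi le_rfl) measurableSet_Ioi,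
        Set.Iic_union_Ioi, measure_univ]
    have h2 := congrArg ENNReal.toReal h1
    rw [ENNReal.toReal_add (measure_ne_top _ _) (measure_ne_top _ _)] at h2
    simp only [ENNReal.toReal_one] at h2
    rw [hF s]; linarith
  have hFB : ∀ t, B ≤ t → F t = 1 := by
    intro t ht
    have h1 : ν (Set.Iic t) = 1 :=
      le_antisymm prob_le_one (hν ▸ measure_mono (fun x hx => hx.2.trans ht))
    rw [hF t, h1]; simp
  -- measure of {s < M}
  have hmin : ∀ s, volume {ω | s < M ω} = ν (Set.Ioi s) * ν (Set.Ioi s) := by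
    intro s
    have hset : {ω | s < M ω} = V₁ ⁻¹' (Set.Ioi s) ∩ V₂ ⁻¹' (Set.Ioi s) := by
      ext ω
      simp [hMdef, lt_min_iff]
    rw [hset, hind.measure_inter_preimage_eq_mul _ _ measurableSet_Ioi measurableSet_Ioi,
      ← Measure.map_apply hm₁ measurableSet_Ioi, ← Measure.map_apply hm₂ measurableSet_Ioi,
      hl₁, hl₂]
  have hminR : ∀ s, (volume {ω | s < M ω}).toReal = (1 - F s) ^ 2 := by
    intro s
    rw [hmin s, ENNReal.toReal_mul, hIoi]; ring
  -- a.s. bound M ≤ B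
  have hMB : ∀ᵐ ω, M ω ≤ B := by
    have h0 : ν (Set.Ioi B) = 0 := by
      have h := hIoi B
      rw [hFB B le_rfl] at h
      simpa [ENNReal.toReal_eq_zero_iff, measure_ne_top] using h
    have h1 : volume {ω | B < V₁ ω} = 0 := by
      have hmap : volume (V₁ ⁻¹' Set.Ioi B) = ν (Set.Ioi B) := by
        rw [← hl₁, Measure.map_apply hm₁ measurableSet_Ioi]
      rw [show {ω | B < V₁ ω} = V₁ ⁻¹' Set.Ioi B from rfl, hmap, h0]
    have hsub : {ω | ¬ M ω ≤ B} ⊆ {ω | B < V₁ ω} := by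
      intro ω hω
      simp only [Set.mem_setOf_eq, not_le] at hω ⊢
      exact lt_of_lt_of_le hω (min_le_left _ _)
    exact measure_mono_null hsub h1
  -- first integral
  set T : Set Ω := {ω | r < max (V₁ ω) (V₂ ω)} with hTdef
  set U : Set Ω := {ω | r < M ω} with hUdef
  have hTm : MeasurableSet T := measurableSet_lt measurable_const (hm₁.max hm₂)
  have hUm : MeasurableSet U := measurableSet_lt measurable_const hmM
  have hUT : U ⊆ T := by
    intro ω hω
    have h : r < M ω := hω
    exact lt_of_lt_of_le h ((min_le_left _ _).trans (le_max_left _ _))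
  have hSeq : {ω : Ω | M ω ≤ r ∧ r < max (V₁ ω) (V₂ ω)} = T \ U := by
    ext ω
    simp only [Set.mem_setOf_eq, Set.mem_diff, hTdef, hUdef, not_lt]
    tauto
  have hTval : (volume T).toReal = 1 - F r ^ 2 := by
    have hc : Tᶜ = V₁ ⁻¹' (Set.Iic r) ∩ V₂ ⁻¹' (Set.Iic r) := by
      ext ω
      simp [hTdef, max_le_iff, not_lt]
    have h1 : volume Tᶜ = ν (Set.Iic r) * ν (Set.Iic r) := by
      rw [hc, hind.measure_inter_preimage_eq_mul _ _ measurableSet_Iic measurableSet_Iic,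
        ← Measure.map_apply hm₁ measurableSet_Iic, ← Measure.map_apply hm₂ measurableSet_Iic,
        hl₁, hl₂]
    have h2 : volume T + volume Tᶜ = 1 := by
      rw [← measure_union (disjoint_compl_right) hTm.compl, Set.union_compl_self, measure_univ]
    have h3 := congrArg ENNReal.toReal h2
    rw [ENNReal.toReal_add (measure_ne_top _ _) (measure_ne_top _ _)] at h3
    simp only [ENNReal.toReal_one] at h3
    have h4 : (volume Tᶜ).toReal = F r ^ 2 := by
      rw [h1, ENNReal.toReal_mul, ← hF r]; ring
    linarith
  have hfirst : (∫ ω, ({ω : Ω | min (V₁ ω) (V₂ ω) ≤ r ∧ r < max (V₁ ω) (V₂ ω)}.indicator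
      (fun _ => r) ω)) = r * ((1 - F r ^ 2) - (1 - F r) ^ 2) := by
    have hSM : MeasurableSet ({ω : Ω | M ω ≤ r ∧ r < max (V₁ ω) (V₂ ω)}) := by
      rw [hSeq]; exact hTm.diff hUm
    rw [show {ω : Ω | min (V₁ ω) (V₂ ω) ≤ r ∧ r < max (V₁ ω) (V₂ ω)}
        = {ω : Ω | M ω ≤ r ∧ r < max (V₁ ω) (V₂ ω)} from rfl]
    rw [integral_indicator hSM, setIntegral_const, hSeq]
    rw [measureReal_def]
    rw [measure_diff hUT hUm.nullMeasurableSet (measure_ne_top _ _)]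
    rw [ENNReal.toReal_sub_of_le (measure_mono hUT) (measure_ne_top _ _)]
    rw [hTval, hminR r, smul_eq_mul]
    ring
  -- second integral
  set f : Ω → ℝ := fun ω => U.indicator M ω with hfdef
  have hf_eq : (∫ ω, ({ω : Ω | r < min (V₁ ω) (V₂ ω)}.indicator
      (fun ω => min (V₁ ω) (V₂ ω)) ω)) = ∫ ω, f ω := rfl
  have hfmeas : Measurable f := hmM.indicator hUm
  have hf_nn : ∀ ω, 0 ≤ f ω := by
    intro ω
    by_cases h : ω ∈ U
    · rw [hfdef]; simp only [Set.indicator_of_mem h]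
      exact le_trans hr0 (le_of_lt h)
    · rw [hfdef]; simp [Set.indicator_of_notMem h]
  have hf_int : Integrable f := by
    apply Integrable.mono' (integrable_const B) hfmeas.aestronglyMeasurable
    filter_upwards [hMB] with ω hω
    rw [Real.norm_eq_abs, abs_of_nonneg (hf_nn ω)]
    by_cases h : ω ∈ U
    · rw [hfdef]; simpa [Set.indicator_of_mem h] using hω
    · rw [hfdef]; simp [Set.indicator_of_notMem h, hB.le]
  have hlayer := hf_int.integral_eq_integral_meas_lt (ae_of_all _ hf_nn)
  -- identify the layercake integrand
  have hint_eq : ∀ t ∈ Set.Ioi (0:ℝ),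
      (volume {a | t < f a}).toReal = (1 - F (max r t)) ^ 2 := by
    intro t ht
    have hset : {a | t < f a} = {a | max r t < M a} := by
      ext a
      simp only [Set.mem_setOf_eq, max_lt_iff]
      constructor
      · intro h
        by_cases hm : a ∈ U
        · rw [hfdef] at h; simp only [Set.indicator_of_mem hm] at h
          exact ⟨hm, h⟩
        · rw [hfdef] at h; simp only [Set.indicator_of_notMem hm] at h
          exact absurd h (not_lt.mpr (le_of_lt ht))
      · intro ⟨h1, h2⟩
        have hm : a ∈ U := h1
        rw [hfdef]; simpa [Set.indicator_of_mem hm] using h2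
    rw [hset, hminR]
  set g : ℝ → ℝ := fun t => (1 - F (max r t)) ^ 2 with hgdef
  have hganti : Antitone g := by
    intro a b hab
    rw [hgdef]
    have h1 : F (max r a) ≤ F (max r b) := hFmono (max_le_max le_rfl hab)
    have h2 := hF1 (max r a)
    have h2' := hF1 (max r b)
    have h3 := hF0 (max r a)
    have h3' := hF0 (max r b)
    simp only
    nlinarith
  have hgmeas : Measurable g := hganti.measurable
  have hgbd : ∀ t, |g t| ≤ 1 := by
    intro t
    have h1 := hF0 (max r t)
    have h2 := hF1 (max r t)
    show |(1 - F (max r t)) ^ 2| ≤ 1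
    rw [abs_of_nonneg (sq_nonneg _)]
    nlinarith
  have hgzero : ∀ t, B ≤ t → g t = 0 := by
    intro t ht
    rw [hgdef]
    simp only
    rw [hFB (max r t) (ht.trans (le_max_right _ _))]
    ring
  have hgion : ∀ s : Set ℝ, volume s ≠ ⊤ → MeasurableSet s → IntegrableOn g s := by
    intro s hs hms
    refine Measure.integrableOn_of_bounded (M := 1) hs hgmeas.aestronglyMeasurable ?_
    exact ae_of_all _ fun t => by rw [Real.norm_eq_abs]; exact hgbd t
  have hgB : IntegrableOn g (Set.Ioi B) := by
    refine (integrableOn_congr_fun (fun t ht => (hgzero t (le_of_lt ht)).symm)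
      measurableSet_Ioi).mp ?_
    exact integrableOn_zero
  have hsplit1 : ∫ t in Set.Ioi (0:ℝ), g t
      = (∫ t in Set.Ioc (0:ℝ) B, g t) + ∫ t in Set.Ioi B, g t := by
    rw [← setIntegral_union (Set.Ioc_disjoint_Ioi le_rfl) measurableSet_Ioi
      (hgion _ (by simp) measurableSet_Ioc) hgB, Set.Ioc_union_Ioi_eq_Ioi hB.le]
  have hgBzero : ∫ t in Set.Ioi B, g t = 0 := by
    rw [setIntegral_congr_fun measurableSet_Ioi (fun t ht => hgzero t (le_of_lt ht))]
    simp
  have hsplit2 : ∫ t in Set.Ioc (0:ℝ) B, g t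
      = (∫ t in Set.Ioc (0:ℝ) r, g t) + ∫ t in Set.Ioc r B, g t := by
    rw [← setIntegral_union (Set.Ioc_disjoint_Ioc_of_le le_rfl) measurableSet_Ioc
      (hgion _ (by simp) measurableSet_Ioc) (hgion _ (by simp) measurableSet_Ioc),
      Set.Ioc_union_Ioc_eq_Ioc hr0 hrB]
  have hg1 : ∫ t in Set.Ioc (0:ℝ) r, g t = r * (1 - F r) ^ 2 := by
    rw [setIntegral_congr_fun measurableSet_Ioc
      (fun t ht => show g t = (1 - F r) ^ 2 by rw [hgdef]; simp [max_eq_left ht.2])]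
    rw [setIntegral_const, measureReal_def, Real.volume_Ioc, smul_eq_mul, ENNReal.toReal_ofReal (by linarith)]
    ring_nf
  have hg2 : ∫ t in Set.Ioc r B, g t = ∫ t in r..B, (1 - F t) ^ 2 := by
    rw [intervalIntegral.integral_of_le hrB]
    exact setIntegral_congr_fun measurableSet_Ioc
      (fun t ht => show g t = (1 - F t) ^ 2 by rw [hgdef]; simp [max_eq_right ht.1.le])
  have hsecond : (∫ ω, f ω) = r * (1 - F r) ^ 2 + ∫ t in r..B, (1 - F t) ^ 2 := by
    rw [hlayer]
    simp only [measureReal_def]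
    rw [setIntegral_congr_fun measurableSet_Ioi hint_eq]
    rw [show (fun t => (1 - F (max r t)) ^ 2) = g from rfl] at *
    rw [hsplit1, hgBzero, hsplit2, hg1, hg2]
    ring
  rw [hfirst, hf_eq, hsecond]
  ring
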